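/- Let X : S¹ × (0,T) → ℝ² be a smooth solution of ∂X/∂t = (h(t) − κ)ν through embedded closed curves with total curvature ∫_{Σ_t} κ ds_t = 2π. Then, at every (p,q,t) with d(p,q,t) ≠ 0, the ratio d/ψ evolves by ∂/∂t (d/ψ) = (1/ψ)(h⟨w, ν_q − ν_p⟩ + ⟨w, κ⃗_q − κ⃗_p⟩) − (d/ψ²) cos(π l/L) (h ∫_p^q κ ds_t − ∫_p^q κ² ds_t) + (d/(π ψ²)) (∫_{Σ_t} κ² ds_t − 2π h)(sin(π l/L) − (π l/L) cos(π l/L)). -/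

import Mathlib

open Real Set MeasureTheory

noncomputable section

/-- The Euclidean plane. -/
abbrev E2 : Type := EuclideanSpace ℝ (Fin 2)

/-- Rotation by minus 90 degrees: `(a, b) ↦ (b, -a)`. -/
def rot90 (u : E2) : E2 := WithLp.toLp 2 ![u 1, -u 0]

/-- Length element `v(p) = ‖∂X/∂p‖`. -/
def lenElem (X : ℝ → E2) (p : ℝ) : ℝ := ‖deriv X p‖

/-- Unit tangent vector `τ = v⁻¹ ∂X/∂p`. -/
def tvec (X : ℝ → E2) (p : ℝ) : E2 := (lenElem X p)⁻¹ • deriv X p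

/-- Outward unit normal `ν = (τ₂, -τ₁)`. -/
def nvec (X : ℝ → E2) (p : ℝ) : E2 := rot90 (tvec X p)

/-- Curvature `κ = -⟨∂τ/∂s, ν⟩`, where `∂/∂s = v⁻¹ ∂/∂p` is the arc-length derivative. -/
def curv (X : ℝ → E2) (p : ℝ) : ℝ :=
  -(inner ℝ ((lenElem X p)⁻¹ • deriv (tvec X) p) (nvec X p) : ℝ)

/-- Curvature vector `κ⃗ = -κ ν`. -/
def kvec (X : ℝ → E2) (p : ℝ) : E2 := (-(curv X p)) • nvec X p

/-- Local total curvature `θ(p,q) = ∫_p^q κ ds`. -/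
def theta (X : ℝ → E2) (p q : ℝ) : ℝ := ∫ r in p..q, curv X r * lenElem X r

/-- Intrinsic (arc-length) distance `l(p,q) = ∫_p^q ds`. -/
def arcl (X : ℝ → E2) (p q : ℝ) : ℝ := ∫ r in p..q, lenElem X r

/-- `∫_p^q κ² ds`. -/
def sqCurvInt (X : ℝ → E2) (p q : ℝ) : ℝ := ∫ r in p..q, (curv X r)^2 * lenElem X r

/-- Total length `L` of the (1-periodic) curve. -/
def clen (X : ℝ → E2) : ℝ := arcl X 0 1

/-- Extrinsic distance `d(p,q) = ‖X(q) - X(p)‖`. -/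
def extd (X : ℝ → E2) (p q : ℝ) : ℝ := ‖X q - X p‖

/-- The unit vector `w = (X(q) - X(p))/d(p,q)`. -/
def wvec (X : ℝ → E2) (p q : ℝ) : E2 := (extd X p q)⁻¹ • (X q - X p)

/-- `ψ(p,q) = (L/π) sin(π l(p,q)/L)`. -/
def psi (X : ℝ → E2) (p q : ℝ) : ℝ :=
  (clen X / π) * Real.sin (π * arcl X p q / clen X)

/-- A closed smooth regular curve, modelled as a 1-periodic map `ℝ → ℝ²`. -/
def IsClosedCurve (X : ℝ → E2) : Prop :=
  ContDiff ℝ (⊤ : ℕ∞) X ∧ Function.Periodic X 1 ∧ ∀ p, deriv X p ≠ 0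

/-- Embeddedness: self-intersections only at parameters differing by a full period. -/
def IsEmbedded (X : ℝ → E2) : Prop :=
  ∀ p q : ℝ, X p = X q → ∃ k : ℤ, q - p = (k : ℝ)

/-- The set of values of the local total curvature over all pairs of points on the curve. -/
def thetaVals (X : ℝ → E2) : Set ℝ :=
  {x : ℝ | ∃ p q : ℝ, p ≤ q ∧ q ≤ p + 1 ∧ x = theta X p q}

/-- The time-`t` curve of a flow. -/
def curveAt (X : ℝ → ℝ → E2) (t : ℝ) : ℝ → E2 := fun p => X p t

/-- Joint smoothness of a flow of curves. -/
def SmoothFlow (X : ℝ → ℝ → E2) : Prop :=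
  ContDiff ℝ (⊤ : ℕ∞) (fun z : ℝ × ℝ => X z.1 z.2)

/-- The flow equation `∂X/∂t = (h(t) - κ)ν` holding for all times in `S`. -/
def FlowEq (X : ℝ → ℝ → E2) (h : ℝ → ℝ) (S : Set ℝ) : Prop :=
  ∀ p : ℝ, ∀ t ∈ S,
    HasDerivAt (fun s => X p s)
      ((h t - curv (curveAt X t) p) • nvec (curveAt X t) p) t


open scoped ContDiff RealInnerProductSpace

section Aux


lemma rot90_apply0 (u : E2) : rot90 u 0 = u 1 := rfl
lemma rot90_apply1 (u : E2) : rot90 u 1 = -u 0 := rfl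

lemma inner_rot90_rot90 (u w : E2) : (inner ℝ (rot90 u) (rot90 w) : ℝ) = inner ℝ u w := by
  simp [PiLp.inner_apply, Fin.sum_univ_two, rot90]
  try ring

lemma inner_rot90_right (u w : E2) : (inner ℝ u (rot90 w) : ℝ) = -(inner ℝ (rot90 u) w : ℝ) := by
  simp [PiLp.inner_apply, Fin.sum_univ_two, rot90]
  try ring

lemma inner_self_rot90 (u : E2) : (inner ℝ u (rot90 u) : ℝ) = 0 := by
  simp [PiLp.inner_apply, Fin.sum_univ_two, rot90]
  try ring

def rotCLM : E2 →L[ℝ] E2 :=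
  LinearMap.toContinuousLinearMap
  { toFun := rot90
    map_add' := by
      intro u v; ext i; fin_cases i <;> simp [rot90] <;> ring
    map_smul' := by
      intro c u; ext i; fin_cases i <;> simp [rot90, mul_neg] }

lemma rotCLM_apply (u : E2) : rotCLM u = rot90 u := rfl

variable {X : ℝ → ℝ → E2}


def Fz (X : ℝ → ℝ → E2) : ℝ × ℝ → E2 := fun z => X z.1 z.2
def Xp (X : ℝ → ℝ → E2) (z : ℝ × ℝ) : E2 := fderiv ℝ (Fz X) z (1,0)
def Xt (X : ℝ → ℝ → E2) (z : ℝ × ℝ) : E2 := fderiv ℝ (Fz X) z (0,1)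

lemma SmoothFlow.fz (hsm : SmoothFlow X) : ContDiff ℝ ∞ (Fz X) := hsm

lemma one_le_inf : (∞ : WithTop ℕ∞) ≠ 0 := by simp

lemma SmoothFlow.dz (hsm : SmoothFlow X) : Differentiable ℝ (Fz X) :=
  hsm.fz.differentiable one_le_inf

lemma SmoothFlow.fd (hsm : SmoothFlow X) : ContDiff ℝ ∞ (fderiv ℝ (Fz X)) :=
  hsm.fz.fderiv_right (m := ∞) (le_of_eq rfl)

lemma hasDerivAt_p (hsm : SmoothFlow X) (z : ℝ × ℝ) :
    HasDerivAt (fun r => X r z.2) (Xp X z) z.1 := by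
  have h1 : HasFDerivAt (Fz X) (fderiv ℝ (Fz X) z) z :=
    (hsm.dz z).hasFDerivAt
  have h2 : HasDerivAt (fun r : ℝ => (r, z.2)) ((1:ℝ), (0:ℝ)) z.1 :=
    (hasDerivAt_id z.1).prodMk (hasDerivAt_const _ _)
  have := h1.comp_hasDerivAt z.1 h2
  exact this

lemma hasDerivAt_t (hsm : SmoothFlow X) (z : ℝ × ℝ) :
    HasDerivAt (fun s => X z.1 s) (Xt X z) z.2 := by
  have h1 : HasFDerivAt (Fz X) (fderiv ℝ (Fz X) z) z :=
    (hsm.dz z).hasFDerivAt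
  have h2 : HasDerivAt (fun s : ℝ => (z.1, s)) ((0:ℝ), (1:ℝ)) z.2 :=
    (hasDerivAt_const _ _).prodMk (hasDerivAt_id z.2)
  have := h1.comp_hasDerivAt z.2 h2
  exact this

lemma deriv_curveAt (hsm : SmoothFlow X) (s r : ℝ) :
    deriv (curveAt X s) r = Xp X (r, s) :=
  (hasDerivAt_p hsm (r, s)).deriv

lemma contDiff_Xp (hsm : SmoothFlow X) : ContDiff ℝ ∞ (Xp X) :=
  (hsm.fd.clm_apply contDiff_const)

lemma contDiff_Xt (hsm : SmoothFlow X) : ContDiff ℝ ∞ (Xt X) :=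
  (hsm.fd.clm_apply contDiff_const)

lemma hasFDerivXp (hsm : SmoothFlow X) (z : ℝ × ℝ) :
    HasFDerivAt (Xp X) ((fderiv ℝ (fderiv ℝ (Fz X)) z).flip ((1:ℝ),(0:ℝ))) z := by
  have h1 : HasFDerivAt (fderiv ℝ (Fz X)) (fderiv ℝ (fderiv ℝ (Fz X)) z) z :=
    (hsm.fd.differentiable one_le_inf z).hasFDerivAt
  exact h1.clm_apply (hasFDerivAt_const _ _) |>.congr_fderiv (by rw [ContinuousLinearMap.comp_zero, zero_add])

lemma schwarz (hsm : SmoothFlow X) (z : ℝ × ℝ) :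
    fderiv ℝ (Xp X) z (0,1) = fderiv ℝ (Xt X) z (1,0) := by
  have hsym := second_derivative_symmetric
    (f := Fz X) (f' := fderiv ℝ (Fz X)) (f'' := fderiv ℝ (fderiv ℝ (Fz X)) z)
    (fun y => (hsm.dz y).hasFDerivAt)
    ((hsm.fd.differentiable one_le_inf z).hasFDerivAt)
    ((0:ℝ),(1:ℝ)) ((1:ℝ),(0:ℝ))
  have h1 : HasFDerivAt (fderiv ℝ (Fz X)) (fderiv ℝ (fderiv ℝ (Fz X)) z) z :=
    (hsm.fd.differentiable one_le_inf z).hasFDerivAt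
  have hp := (h1.clm_apply (hasFDerivAt_const ((1:ℝ),(0:ℝ)) z)).fderiv
  have ht := (h1.clm_apply (hasFDerivAt_const ((0:ℝ),(1:ℝ)) z)).fderiv
  calc fderiv ℝ (Xp X) z (0,1) = fderiv ℝ (fderiv ℝ (Fz X)) z (0,1) (1,0) := by
        rw [show Xp X = fun w => fderiv ℝ (Fz X) w (1,0) from rfl, hp]; simp
    _ = fderiv ℝ (fderiv ℝ (Fz X)) z (1,0) (0,1) := hsym
    _ = fderiv ℝ (Xt X) z (1,0) := by
        rw [show Xt X = fun w => fderiv ℝ (Fz X) w (0,1) from rfl, ht]; simp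


lemma hasDerivAt_norm_aux {u : ℝ → E2} {u' : E2} {s : ℝ}
    (hu : HasDerivAt u u' s) (hne : u s ≠ 0) :
    HasDerivAt (fun x => ‖u x‖) (‖u s‖⁻¹ * ⟪u s, u'⟫) s := by
  have hinner : HasDerivAt (fun x => ⟪u x, u x⟫) (⟪u s, u'⟫ + ⟪u', u s⟫) s :=
    hu.inner ℝ hu
  have hpos : (0:ℝ) < ⟪u s, u s⟫ := by
    rw [real_inner_self_eq_norm_sq]; exact pow_pos (norm_pos_iff.mpr hne) 2
  have hsq := (Real.hasDerivAt_sqrt (ne_of_gt hpos)).comp s hinner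
  simp only [Function.comp_def] at hsq
  have hfun : (fun x => ‖u x‖) = fun x => Real.sqrt ⟪u x, u x⟫ :=
    funext fun x => norm_eq_sqrt_real_inner _
  rw [← hfun] at hsq
  have hval : 1 / (2 * Real.sqrt ⟪u s, u s⟫) * (⟪u s, u'⟫ + ⟪u', u s⟫)
      = ‖u s‖⁻¹ * ⟪u s, u'⟫ := by
    rw [← norm_eq_sqrt_real_inner, real_inner_comm u' (u s)]
    have h0 : ‖u s‖ ≠ 0 := norm_ne_zero_iff.mpr hne
    field_simp
    ring
  rwa [hval] at hsq

def Vf (X : ℝ → ℝ → E2) (z : ℝ × ℝ) : ℝ := ‖Xp X z‖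
def Tf (X : ℝ → ℝ → E2) (z : ℝ × ℝ) : E2 := (Vf X z)⁻¹ • Xp X z
def Nf (X : ℝ → ℝ → E2) (z : ℝ × ℝ) : E2 := rot90 (Tf X z)
def TfP (X : ℝ → ℝ → E2) (z : ℝ × ℝ) : E2 := fderiv ℝ (Tf X) z (1,0)
def Kj (X : ℝ → ℝ → E2) (z : ℝ × ℝ) : ℝ := -((Vf X z)⁻¹ * ⟪TfP X z, Nf X z⟫)
def Wf (X : ℝ → ℝ → E2) (z : ℝ × ℝ) : ℝ := (Vf X z)⁻¹ * ⟪Xp X z, fderiv ℝ (Xp X) z (0,1)⟫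

variable {z : ℝ × ℝ}

lemma Vf_ne (hz : Xp X z ≠ 0) : Vf X z ≠ 0 := norm_ne_zero_iff.mpr hz

lemma contDiffAt_Vf (hsm : SmoothFlow X) (hz : Xp X z ≠ 0) : ContDiffAt ℝ ∞ (Vf X) z :=
  ContDiffAt.norm ℝ (contDiff_Xp hsm).contDiffAt hz

lemma contDiffAt_Tf (hsm : SmoothFlow X) (hz : Xp X z ≠ 0) : ContDiffAt ℝ ∞ (Tf X) z :=
  ((contDiffAt_Vf hsm hz).inv (Vf_ne hz)).smul (contDiff_Xp hsm).contDiffAt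

lemma contDiffAt_Nf (hsm : SmoothFlow X) (hz : Xp X z ≠ 0) : ContDiffAt ℝ ∞ (Nf X) z := by
  have : Nf X = fun w => rotCLM (Tf X w) := rfl
  rw [this]
  exact (rotCLM.contDiff.contDiffAt).comp z (contDiffAt_Tf hsm hz)

lemma contDiffAt_TfP (hsm : SmoothFlow X) (hz : Xp X z ≠ 0) : ContDiffAt ℝ ∞ (TfP X) z :=
  ((contDiffAt_Tf hsm hz).fderiv_right (m := ∞) (le_of_eq rfl)).clm_apply contDiffAt_const

lemma contDiffAt_Kj (hsm : SmoothFlow X) (hz : Xp X z ≠ 0) : ContDiffAt ℝ ∞ (Kj X) z := by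
  have : Kj X = fun w => -((Vf X w)⁻¹ * ⟪TfP X w, Nf X w⟫) := rfl
  rw [this]
  exact (((contDiffAt_Vf hsm hz).inv (Vf_ne hz)).mul
    (ContDiffAt.inner ℝ (contDiffAt_TfP hsm hz) (contDiffAt_Nf hsm hz))).neg

lemma contDiffAt_Wf (hsm : SmoothFlow X) (hz : Xp X z ≠ 0) : ContDiffAt ℝ ∞ (Wf X) z := by
  have : Wf X = fun w => (Vf X w)⁻¹ * ⟪Xp X w, fderiv ℝ (Xp X) w (0,1)⟫ := rfl
  rw [this]
  exact ((contDiffAt_Vf hsm hz).inv (Vf_ne hz)).mul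
    (ContDiffAt.inner ℝ (contDiff_Xp hsm).contDiffAt
      (((contDiff_Xp hsm).contDiffAt.fderiv_right (m := ∞) (le_of_eq rfl)).clm_apply
        contDiffAt_const))

lemma contDiffAt_line (r s : ℝ) : ContDiff ℝ ∞ (fun r' : ℝ => ((r', s) : ℝ × ℝ)) :=
  contDiff_id.prodMk contDiff_const

lemma lenElem_eq (hsm : SmoothFlow X) (s r : ℝ) :
    lenElem (curveAt X s) r = Vf X (r, s) := by
  unfold lenElem Vf; rw [deriv_curveAt hsm]

lemma tvec_eq (hsm : SmoothFlow X) (s r : ℝ) :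
    tvec (curveAt X s) r = Tf X (r, s) := by
  unfold tvec Tf; rw [deriv_curveAt hsm, ← lenElem_eq hsm]

lemma nvec_eq (hsm : SmoothFlow X) (s r : ℝ) :
    nvec (curveAt X s) r = Nf X (r, s) := by
  unfold nvec Nf; rw [tvec_eq hsm]

lemma hasDerivAt_Tf_line (hsm : SmoothFlow X) {s r : ℝ} (hz : Xp X (r, s) ≠ 0) :
    HasDerivAt (fun r' => Tf X (r', s)) (TfP X (r, s)) r := by
  have h1 : HasFDerivAt (Tf X) (fderiv ℝ (Tf X) (r, s)) (r, s) :=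
    ((contDiffAt_Tf hsm hz).differentiableAt one_le_inf).hasFDerivAt
  have h2 : HasDerivAt (fun r' : ℝ => ((r', s) : ℝ × ℝ)) ((1:ℝ), (0:ℝ)) r :=
    (hasDerivAt_id r).prodMk (hasDerivAt_const _ _)
  exact h1.comp_hasDerivAt r h2

lemma hasDerivAt_tvec (hsm : SmoothFlow X) {s : ℝ} (hrs : ∀ r, Xp X (r, s) ≠ 0) (r : ℝ) :
    HasDerivAt (tvec (curveAt X s)) (TfP X (r, s)) r := by
  have : tvec (curveAt X s) = fun r' => Tf X (r', s) := funext (tvec_eq hsm s)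
  rw [this]
  exact hasDerivAt_Tf_line hsm (hrs r)

lemma curv_eq (hsm : SmoothFlow X) {s : ℝ} (hrs : ∀ r, Xp X (r, s) ≠ 0) (r : ℝ) :
    curv (curveAt X s) r = Kj X (r, s) := by
  unfold curv Kj
  rw [(hasDerivAt_tvec hsm hrs r).deriv, lenElem_eq hsm, nvec_eq hsm, real_inner_smul_left]

lemma Xp_eq_smul (hz : Xp X z ≠ 0) : Xp X z = Vf X z • Tf X z := by
  unfold Tf; rw [smul_smul, mul_inv_cancel₀ (Vf_ne hz), one_smul]

lemma inner_TfP_Nf (hz : Xp X z ≠ 0) : ⟪TfP X z, Nf X z⟫ = -(Kj X z * Vf X z) := by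
  have h := Vf_ne hz
  unfold Kj
  field_simp

lemma Wf_eq_flow (hsm : SmoothFlow X) {h : ℝ → ℝ} {S : Set ℝ} (hflow : FlowEq X h S)
    {s : ℝ} (hs : s ∈ S) (hrs : ∀ r, Xp X (r, s) ≠ 0) (r : ℝ) :
    Wf X (r, s) = (h s - Kj X (r, s)) * Kj X (r, s) * Vf X (r, s) := by
  have hXtG : ∀ r', Xt X (r', s) = (h s - Kj X (r', s)) • Nf X (r', s) := by
    intro r'
    have h1 := hflow r' s hs
    rw [curv_eq hsm hrs r', nvec_eq hsm] at h1
    exact (hasDerivAt_t hsm (r', s)).unique h1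
  have hκ : HasDerivAt (fun r' => Kj X (r', s)) (deriv (fun r' => Kj X (r', s)) r) r := by
    refine DifferentiableAt.hasDerivAt ?_
    exact ((contDiffAt_Kj hsm (hrs r)).comp r (contDiffAt_line r s).contDiffAt).differentiableAt
      one_le_inf
  have hν : HasDerivAt (fun r' => Nf X (r', s)) (rotCLM (TfP X (r, s))) r := by
    have : (fun r' => Nf X (r', s)) = fun r' => rotCLM (Tf X (r', s)) := rfl
    rw [this]
    exact rotCLM.hasFDerivAt.comp_hasDerivAt r (hasDerivAt_Tf_line hsm (hrs r))
  have hG : HasDerivAt (fun r' => (h s - Kj X (r', s)) • Nf X (r', s))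
      ((h s - Kj X (r, s)) • rotCLM (TfP X (r, s)) +
        (0 - deriv (fun r' => Kj X (r', s)) r) • Nf X (r, s)) r :=
    ((hasDerivAt_const r (h s)).sub hκ).smul hν
  have hXt : HasDerivAt (fun r' => Xt X (r', s)) (fderiv ℝ (Xt X) (r, s) (1, 0)) r := by
    have h1 : HasFDerivAt (Xt X) (fderiv ℝ (Xt X) (r, s)) (r, s) :=
      ((contDiff_Xt hsm).differentiable one_le_inf (r, s)).hasFDerivAt
    exact h1.comp_hasDerivAt r ((hasDerivAt_id r).prodMk (hasDerivAt_const r s))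
  rw [funext hXtG] at hXt
  have hEq : fderiv ℝ (Xt X) (r, s) (1, 0) =
      (h s - Kj X (r, s)) • rotCLM (TfP X (r, s)) +
        (0 - deriv (fun r' => Kj X (r', s)) r) • Nf X (r, s) := hXt.unique hG
  have hSch := schwarz hsm (r, s)
  unfold Wf
  rw [hSch, hEq]
  have hVne := Vf_ne (hrs r)
  have h1 : ⟪Xp X (r, s), Nf X (r, s)⟫ = 0 := by
    rw [Xp_eq_smul (hrs r), real_inner_smul_left]
    unfold Nf
    rw [inner_self_rot90, mul_zero]
  have h2 : ⟪Xp X (r, s), rotCLM (TfP X (r, s))⟫ = Kj X (r, s) * (Vf X (r, s))^2 := by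
    rw [rotCLM_apply, inner_rot90_right, Xp_eq_smul (hrs r)]
    have : rot90 (Vf X (r, s) • Tf X (r, s)) = Vf X (r, s) • rot90 (Tf X (r, s)) := by
      rw [← rotCLM_apply, ← rotCLM_apply, rotCLM.map_smul]
    rw [this, real_inner_smul_left]
    have h3 : ⟪rot90 (Tf X (r, s)), TfP X (r, s)⟫ = -(Kj X (r, s) * Vf X (r, s)) := by
      rw [real_inner_comm]
      exact inner_TfP_Nf (hrs r)
    rw [show rot90 (Tf X (r,s)) = Nf X (r,s) from rfl]
    rw [show ⟪Nf X (r,s), TfP X (r,s)⟫ = -(Kj X (r,s) * Vf X (r,s)) from h3]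
    ring
  rw [inner_add_right, real_inner_smul_right, real_inner_smul_right, h1, h2]
  field_simp
  ring

lemma hasDerivAt_Vf_time (hsm : SmoothFlow X) {r s : ℝ} (hz : Xp X (r, s) ≠ 0) :
    HasDerivAt (fun s' => Vf X (r, s')) (Wf X (r, s)) s := by
  have hXp : HasDerivAt (fun s' => Xp X (r, s')) (fderiv ℝ (Xp X) (r, s) (0, 1)) s := by
    have h1 : HasFDerivAt (Xp X) (fderiv ℝ (Xp X) (r, s)) (r, s) :=
      ((contDiff_Xp hsm).differentiable one_le_inf (r, s)).hasFDerivAt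
    exact h1.comp_hasDerivAt s ((hasDerivAt_const _ _).prodMk (hasDerivAt_id s))
  exact hasDerivAt_norm_aux hXp hz

lemma continuous_Vf (hsm : SmoothFlow X) : Continuous (Vf X) :=
  (contDiff_Xp hsm).continuous.norm

lemma hasDerivAt_arcl (hsm : SmoothFlow X) {h : ℝ → ℝ} {S : Set ℝ}
    (hSopen : IsOpen S) (hflow : FlowEq X h S)
    (hregS : ∀ s ∈ S, ∀ r, Xp X (r, s) ≠ 0) {t : ℝ} (ht : t ∈ S) (a b : ℝ) :
    HasDerivAt (fun s => arcl (curveAt X s) a b)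
      (h t * theta (curveAt X t) a b - sqCurvInt (curveAt X t) a b) t := by
  obtain ⟨ε, hε, hball⟩ := Metric.isOpen_iff.mp hSopen t ht
  set ε' := ε / 2 with hε'def
  have hε' : 0 < ε' := by positivity
  have hcb : Metric.closedBall t ε' ⊆ S := by
    refine subset_trans ?_ hball
    intro x hx
    have : dist x t ≤ ε' := hx
    exact Metric.mem_ball.mpr (lt_of_le_of_lt this (by simp [hε'def]; linarith))
  have hballS : Metric.ball t ε' ⊆ S := Metric.ball_subset_closedBall.trans hcb
  set K : Set (ℝ × ℝ) := uIcc a b ×ˢ Metric.closedBall t ε' with hKdef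
  have hK : IsCompact K := isCompact_uIcc.prod (isCompact_closedBall t ε')
  have hWcont : ContinuousOn (Wf X) K := by
    intro w hw
    exact ((contDiffAt_Wf hsm (hregS w.2 (hcb hw.2) w.1)).continuousAt).continuousWithinAt
  obtain ⟨C, hC⟩ := hK.exists_bound_of_continuousOn hWcont
  have hVcontline : ∀ x : ℝ, Continuous fun r => Vf X (r, x) := fun x =>
    (continuous_Vf hsm).comp (continuous_id.prodMk continuous_const)
  have hWcontline : Continuous fun r => Wf X (r, t) := by
    refine continuous_iff_continuousAt.mpr fun r => ?_
    exact ((contDiffAt_Wf hsm (hregS t ht r)).comp r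
      (contDiffAt_line r t).contDiffAt).continuousAt
  have main := intervalIntegral.hasDerivAt_integral_of_dominated_loc_of_deriv_le
    (F := fun x r => Vf X (r, x)) (F' := fun x r => Wf X (r, x)) (x₀ := t)
    (a := a) (b := b) (bound := fun _ => C) (μ := volume) (s := Metric.ball t ε') (Metric.ball_mem_nhds t hε')
    (Filter.Eventually.of_forall fun x => ((hVcontline x).aestronglyMeasurable))
    ((hVcontline t).intervalIntegrable a b)
    (hWcontline.aestronglyMeasurable)
    (Filter.Eventually.of_forall fun r hr x hx =>
      hC (r, x) ⟨uIoc_subset_uIcc hr, Metric.ball_subset_closedBall hx⟩)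
    (intervalIntegrable_const)
    (Filter.Eventually.of_forall fun r _ x hx =>
      hasDerivAt_Vf_time hsm (hregS x (hballS hx) r))
  have hD := main.2
  have hfun : (fun x => ∫ r in a..b, Vf X (r, x)) = fun s => arcl (curveAt X s) a b := by
    funext s
    exact (intervalIntegral.integral_congr fun r _ => (lenElem_eq hsm s r)).symm
  rw [hfun] at hD
  have hKcont : Continuous fun r => Kj X (r, t) := by
    refine continuous_iff_continuousAt.mpr fun r => ?_
    exact ((contDiffAt_Kj hsm (hregS t ht r)).comp r
      (contDiffAt_line r t).contDiffAt).continuousAt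
  have hval : (∫ r in a..b, Wf X (r, t))
      = h t * theta (curveAt X t) a b - sqCurvInt (curveAt X t) a b := by
    have h1 : (∫ r in a..b, Wf X (r, t))
        = ∫ r in a..b, (h t * (Kj X (r, t) * Vf X (r, t)) - (Kj X (r, t))^2 * Vf X (r, t)) := by
      refine intervalIntegral.integral_congr fun r _ => ?_
      rw [Wf_eq_flow hsm hflow ht (hregS t ht) r]
      ring
    have hint1 : IntervalIntegrable (fun r => h t * (Kj X (r, t) * Vf X (r, t))) volume a b :=
      (continuous_const.mul (hKcont.mul ((hVcontline t)))).intervalIntegrable a b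
    have hint2 : IntervalIntegrable (fun r => (Kj X (r, t))^2 * Vf X (r, t)) volume a b :=
      ((hKcont.pow 2).mul ((hVcontline t))).intervalIntegrable a b
    rw [h1, intervalIntegral.integral_sub hint1 hint2, intervalIntegral.integral_const_mul]
    have h2 : theta (curveAt X t) a b = ∫ r in a..b, Kj X (r, t) * Vf X (r, t) := by
      refine intervalIntegral.integral_congr fun r _ => ?_
      rw [curv_eq hsm (hregS t ht) r, lenElem_eq hsm t r]
    have h3 : sqCurvInt (curveAt X t) a b = ∫ r in a..b, (Kj X (r, t))^2 * Vf X (r, t) := by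
      refine intervalIntegral.integral_congr fun r _ => ?_
      rw [curv_eq hsm (hregS t ht) r, lenElem_eq hsm t r]
    rw [h2, h3]
  rwa [hval] at hD

lemma lenElem_periodic {Y : ℝ → E2} (hYper : Function.Periodic Y 1) :
    Function.Periodic (lenElem Y) 1 := by
  intro r
  unfold lenElem
  have : deriv Y (r + 1) = deriv Y r := by
    conv_rhs => rw [show Y = fun x => Y (x + 1) from funext fun x => (hYper x).symm]
    rw [deriv_comp_add_const]
  rw [this]

lemma clen_pos {Y : ℝ → E2} (hcont : Continuous (lenElem Y))
    (hpos : ∀ r, 0 < lenElem Y r) : 0 < clen Y :=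
  intervalIntegral.intervalIntegral_pos_of_pos_on (hcont.intervalIntegrable 0 1) (fun x _ => hpos x) one_pos

lemma psi_ne_aux {Y : ℝ → E2} (hYper : Function.Periodic Y 1)
    (hcont : Continuous (lenElem Y)) (hpos : ∀ r, 0 < lenElem Y r)
    {p q : ℝ} (hd : extd Y p q ≠ 0) : psi Y p q ≠ 0 := by
  have hL : 0 < clen Y := clen_pos hcont hpos
  have hπ : (π : ℝ) ≠ 0 := Real.pi_ne_zero
  unfold psi
  refine mul_ne_zero (div_ne_zero (ne_of_gt hL) hπ) ?_
  intro hsin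
  obtain ⟨n, hn⟩ := Real.sin_eq_zero_iff.mp hsin
  have hlnL : arcl Y p q = n * clen Y := by
    have h2 := congrArg (fun x : ℝ => x * clen Y) hn
    rw [div_mul_cancel₀ _ (ne_of_gt hL)] at h2
    refine mul_left_cancel₀ hπ ?_
    linarith
  set g : ℝ → ℝ := fun x => ∫ r in p..x, lenElem Y r with hg
  have hperlen := lenElem_periodic hYper
  have hgmono : StrictMono g := by
    refine strictMono_of_deriv_pos fun x => ?_
    have hx : HasDerivAt g (lenElem Y x) x :=
      intervalIntegral.integral_hasDerivAt_right (hcont.intervalIntegrable p x)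
        (hcont.stronglyMeasurableAtFilter volume (nhds x)) hcont.continuousAt
    rw [hx.deriv]; exact hpos x
  have hgq : g q = n * clen Y := hlnL
  have hgpn : g (p + n) = n * clen Y := by
    have h1 := hperlen.intervalIntegral_add_zsmul_eq n p
      (fun t1 t2 => hcont.intervalIntegrable t1 t2)
    have h2 := hperlen.intervalIntegral_add_eq p 0
    rw [h2] at h1
    have : (p + n * 1) = p + (n:ℝ) := by ring
    simpa [zsmul_eq_mul, clen, arcl, this] using h1
  have hq : q = p + n := hgmono.injective (by rw [hgq, ← hgpn])
  apply hd
  have hYq : Y q = Y p := by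
    rw [hq]
    have := (hYper.zsmul n) p
    simpa [zsmul_eq_mul] using this
  unfold extd
  rw [hYq, sub_self, norm_zero]

lemma hasDerivAt_extd (hsm : SmoothFlow X) {h : ℝ → ℝ} {S : Set ℝ} (hflow : FlowEq X h S)
    {t : ℝ} (ht : t ∈ S) (p q : ℝ) (hd : extd (curveAt X t) p q ≠ 0) :
    HasDerivAt (fun s => extd (curveAt X s) p q)
      (h t * ⟪wvec (curveAt X t) p q, nvec (curveAt X t) q - nvec (curveAt X t) p⟫
        + ⟪wvec (curveAt X t) p q, kvec (curveAt X t) q - kvec (curveAt X t) p⟫) t := by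
  set Y := curveAt X t with hY
  set u : ℝ → E2 := fun s => X q s - X p s with hu
  have hune : u t ≠ 0 := by
    intro h0
    apply hd
    unfold extd
    have : Y q - Y p = u t := rfl
    rw [this, h0, norm_zero]
  have huder : HasDerivAt u
      ((h t - curv Y q) • nvec Y q - (h t - curv Y p) • nvec Y p) t :=
    (hflow q t ht).sub (hflow p t ht)
  have hnorm := hasDerivAt_norm_aux huder hune
  have hfun : (fun s => extd (curveAt X s) p q) = fun s => ‖u s‖ := rfl
  rw [← hfun] at hnorm
  have hval : ‖u t‖⁻¹ * ⟪u t, (h t - curv Y q) • nvec Y q - (h t - curv Y p) • nvec Y p⟫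
      = h t * ⟪wvec Y p q, nvec Y q - nvec Y p⟫ + ⟪wvec Y p q, kvec Y q - kvec Y p⟫ := by
    have hw : wvec Y p q = (extd Y p q)⁻¹ • (u t) := rfl
    have hext : extd Y p q = ‖u t‖ := rfl
    have hsplit : (h t - curv Y q) • nvec Y q - (h t - curv Y p) • nvec Y p
        = h t • (nvec Y q - nvec Y p) + (kvec Y q - kvec Y p) := by
      unfold kvec
      module
    rw [hsplit, hw, hext, real_inner_smul_left, real_inner_smul_left, inner_add_right,
      real_inner_smul_right]
    ring
  rwa [hval] at hnorm

end Aux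

/-- **Evolution of the ratio `d/ψ`.**
Along the flow `∂X/∂t = (h(t) - κ)ν` through embedded closed curves of total curvature
`2π`, at every `(p,q,t)` with `d(p,q,t) ≠ 0`,
`∂/∂t (d/ψ) = (1/ψ)(h⟨w, ν_q - ν_p⟩ + ⟨w, κ⃗_q - κ⃗_p⟩)
  - (d/ψ²) cos(π l/L)(h ∫_p^q κ ds - ∫_p^q κ² ds)
  + (d/(π ψ²))(∫_Σ κ² ds - 2πh)(sin(π l/L) - (π l/L) cos(π l/L))`. -/
theorem evolution_of_ratio
    (T : ℝ) (hT : 0 < T) (X : ℝ → ℝ → E2) (h : ℝ → ℝ)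
    (hsm : SmoothFlow X)
    (hper : ∀ t, Function.Periodic (curveAt X t) 1)
    (hreg : ∀ t ∈ Set.Ioo 0 T, ∀ p, deriv (curveAt X t) p ≠ 0)
    (hemb : ∀ t ∈ Set.Ioo 0 T, IsEmbedded (curveAt X t))
    (htot : ∀ t ∈ Set.Ioo 0 T, theta (curveAt X t) 0 1 = 2 * π)
    (hh : ∀ t ∈ Set.Ioo 0 T, 0 ≤ h t)
    (hhsm : ContDiffOn ℝ (⊤ : ℕ∞) h (Set.Ioo 0 T))
    (hflow : FlowEq X h (Set.Ioo 0 T))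
    (p q : ℝ) (t : ℝ) (ht : t ∈ Set.Ioo 0 T)
    (hd : extd (curveAt X t) p q ≠ 0) :
    HasDerivAt (fun s : ℝ => extd (curveAt X s) p q / psi (curveAt X s) p q)
      ((psi (curveAt X t) p q)⁻¹ *
          (h t * (inner ℝ (wvec (curveAt X t) p q) (nvec (curveAt X t) q - nvec (curveAt X t) p) : ℝ)
            + (inner ℝ (wvec (curveAt X t) p q) (kvec (curveAt X t) q - kvec (curveAt X t) p) : ℝ))
        - extd (curveAt X t) p q / (psi (curveAt X t) p q) ^ 2
            * Real.cos (π * arcl (curveAt X t) p q / clen (curveAt X t))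
            * (h t * theta (curveAt X t) p q - sqCurvInt (curveAt X t) p q)
        + extd (curveAt X t) p q / (π * (psi (curveAt X t) p q) ^ 2)
            * (sqCurvInt (curveAt X t) 0 1 - 2 * π * h t)
            * (Real.sin (π * arcl (curveAt X t) p q / clen (curveAt X t))
              - (π * arcl (curveAt X t) p q / clen (curveAt X t))
                  * Real.cos (π * arcl (curveAt X t) p q / clen (curveAt X t)))) t := by
  have hS : IsOpen (Set.Ioo (0:ℝ) T) := isOpen_Ioo
  have hregS : ∀ s ∈ Set.Ioo (0:ℝ) T, ∀ r, Xp X (r, s) ≠ 0 := by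
    intro s hs r
    rw [← deriv_curveAt hsm]
    exact hreg s hs r
  set Y := curveAt X t with hYdef
  have hlenY : ∀ r, lenElem Y r = Vf X (r, t) := lenElem_eq hsm t
  have hcontY : Continuous (lenElem Y) := by
    rw [show lenElem Y = fun r => Vf X (r, t) from funext hlenY]
    exact (continuous_Vf hsm).comp (continuous_id.prodMk continuous_const)
  have hposY : ∀ r, 0 < lenElem Y r := fun r => by
    rw [hlenY r]; exact norm_pos_iff.mpr (hregS t ht r)
  have hL : 0 < clen Y := clen_pos hcontY hposY
  have hLne : clen Y ≠ 0 := ne_of_gt hL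
  have hπ : (π : ℝ) ≠ 0 := Real.pi_ne_zero
  have hψne : psi Y p q ≠ 0 := psi_ne_aux (hper t) hcontY hposY hd
  have hSvne : Real.sin (π * arcl Y p q / clen Y) ≠ 0 := by
    intro h0
    apply hψne
    unfold psi
    rw [h0, mul_zero]
  have hl := hasDerivAt_arcl hsm hS hflow hregS ht p q
  have hLder0 := hasDerivAt_arcl hsm hS hflow hregS ht 0 1
  have hLder : HasDerivAt (fun s => clen (curveAt X s))
      (h t * (2 * π) - sqCurvInt Y 0 1) t := by
    have heq : (fun s => clen (curveAt X s)) = fun s => arcl (curveAt X s) 0 1 := rfl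
    rw [heq, ← htot t ht]
    exact hLder0
  have hD := hasDerivAt_extd hsm hflow ht p q hd
  have hdiv := (hl.const_mul π).div hLder hLne
  have hsin := hdiv.sin
  have hψ := (hLder.div_const π).mul hsin
  have hfinal := hD.div hψ hψne
  refine hfinal.congr_deriv ?_
  simp only [psi, Pi.mul_apply, Pi.div_apply, ← hYdef]
  field_simp
  ring
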